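/- arXiv:math/0612719 — 2 statements merged into one kernel-verified Lean document; each statement's English description precedes it below -/
import Mathlib

section
/- For any nonnegative continuous function φ on a compact convex set Ω̄ ⊂ ℝ², and any Lipschitz curve σ : [0,1] → Ω̄, the weighted length L_φ(σ) := ∫₀¹ φ(σ(t))|σ'(t)| dt equals the supremum, over all subdivisions 0 = t₁ < t₂ < ... < t_{n+1} = 1 of [0,1], of Σᵢ (inf_{t ∈ [tᵢ, tᵢ₊₁]} φ(σ(t))) · |σ(tᵢ₊₁) − σ(tᵢ)|. -/
open MeasureTheory Set Filter Topology
noncomputable section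

abbrev E2 : Type := EuclideanSpace ℝ (Fin 2)
abbrev Curves : Type := C(ℝ, E2)
instance : MeasurableSpace Curves := borel Curves
instance : BorelSpace Curves := ⟨rfl⟩

/-- Weighted length `L_φ(σ) = ∫₀¹ φ(σ(t)) |σ'(t)| dt`. -/
def Lw (φ : E2 → ℝ) (σ : ℝ → E2) : ℝ := ∫ t in (0:ℝ)..1, φ (σ t) * ‖deriv σ t‖

/-- Length of a curve. -/
def len (σ : ℝ → E2) : ℝ := ∫ t in (0:ℝ)..1, ‖deriv σ t‖

/-- A Lipschitz curve valued in `Ωb`. -/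
def IsCurveIn (Ωb : Set E2) (σ : ℝ → E2) : Prop :=
  (∃ K : NNReal, LipschitzOnWith K σ (Icc 0 1)) ∧ ∀ t ∈ Icc (0:ℝ) 1, σ t ∈ Ωb

/-- `ι` is the traffic intensity of `Q`. -/
def IsIntensity (Q : Measure Curves) (ι : Measure E2) : Prop :=
  ∀ φ : C(E2, ℝ), ∫ x, φ x ∂ι = ∫ σ, Lw φ (⇑σ) ∂Q

/-- Geodesic cost associated to a metric `ξ`. -/
def cost (Ωb : Set E2) (ξ : E2 → ℝ) (x y : E2) : ℝ :=
  sInf {v : ℝ | ∃ σ : ℝ → E2, IsCurveIn Ωb σ ∧ σ 0 = x ∧ σ 1 = y ∧ v = Lw ξ σ}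

/-- `ξₙ → ξ` in `L^p(Ω)`. -/
def LqTendsto (Ω : Set E2) (p : ℝ) (ξn : ℕ → E2 → ℝ) (ξ : E2 → ℝ) : Prop :=
  Tendsto (fun n => eLpNorm (fun x => ξn n x - ξ x) (ENNReal.ofReal p) (volume.restrict Ω))
    atTop (𝓝 0)

/-- The set `A(ξ)` of uniform limits of costs along approximating sequences. -/
def relLimits (Ω : Set E2) (p : ℝ) (ξ : E2 → ℝ) : Set (E2 × E2 → ℝ) :=
  {c | ∃ ξn : ℕ → C(E2, ℝ), (∀ n x, 0 ≤ ξn n x) ∧ LqTendsto Ω p (fun n x => ξn n x) ξ ∧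
    TendstoUniformlyOn (fun n z => cost (closure Ω) (⇑(ξn n)) z.1 z.2) c atTop
      (closure Ω ×ˢ closure Ω)}

/-- Relaxed geodesic cost `c̄_ξ`. -/
def cbar (Ω : Set E2) (p : ℝ) (ξ : E2 → ℝ) (x y : E2) : ℝ :=
  sSup {v : ℝ | ∃ c ∈ relLimits Ω p ξ, v = c (x, y)}

/-- Membership in `Q^q(μ₀,μ₁)` with density witness `f` for the traffic intensity. -/
def InQq (Ω : Set E2) (μ0 μ1 : Measure E2) (q : ℝ) (Q : Measure Curves) (f : E2 → ℝ) : Prop :=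
  IsProbabilityMeasure Q ∧
  Q {σ : Curves | IsCurveIn (closure Ω) ⇑σ} = 1 ∧
  Q.map (fun σ : Curves => σ 0) = μ0 ∧ Q.map (fun σ : Curves => σ 1) = μ1 ∧
  MemLp f (ENNReal.ofReal q) (volume.restrict Ω) ∧
  (∀ᵐ x ∂(volume.restrict Ω), 0 ≤ f x) ∧
  ∀ φ : C(E2, ℝ), ∫ x in Ω, φ x * f x = ∫ σ, Lw φ (⇑σ) ∂Q

/-- The `L¹(C,Q)` extension of the weighted length to an `L^{q*}` metric `ξ`. -/
def IsLext (Ω : Set E2) (p : ℝ) (ξ : E2 → ℝ) (Q : Measure Curves) (Lext : Curves → ℝ) : Prop :=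
  ∀ ξn : ℕ → C(E2, ℝ), (∀ n x, 0 ≤ ξn n x) → LqTendsto Ω p (fun n x => ξn n x) ξ →
    Tendsto (fun n => ∫ σ, |Lw (⇑(ξn n)) ⇑σ - Lext σ| ∂Q) atTop (𝓝 0)

/-- Legendre–Fenchel transform of `H` on `ℝ₊`. -/
def Hstar (H : ℝ → ℝ) (w : ℝ) : ℝ := sSup {v : ℝ | ∃ z : ℝ, 0 ≤ z ∧ v = z * w - H z}

section
open intervalIntegral
namespace WLSS
lemma norm_deriv_le {K : NNReal} {τ : ℝ → E2} (hτ : LipschitzWith K τ) (t : ℝ) :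
    ‖deriv τ t‖ ≤ K := by
  by_cases h : DifferentiableAt ℝ τ t
  · have h2 : ‖fderiv ℝ τ t‖ ≤ K := h.hasFDerivAt.le_of_lipschitz hτ
    calc ‖deriv τ t‖ = ‖fderiv ℝ τ t 1‖ := by rw [fderiv_apply_one_eq_deriv]
    _ ≤ ‖fderiv ℝ τ t‖ * ‖(1:ℝ)‖ := (fderiv ℝ τ t).le_opNorm 1
    _ ≤ K := by simpa using h2
  · rw [deriv_zero_of_not_differentiableAt h]; simpa using K.coe_nonneg

lemma intervalIntegrable_of_bounded {g : ℝ → ℝ} (hg : AEStronglyMeasurable g volume)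
    {C : ℝ} (hC : ∀ t, |g t| ≤ C) (a b : ℝ) : IntervalIntegrable g volume a b := by
  refine (_root_.intervalIntegrable_const (c := C)).mono_fun' (hg.restrict) ?_
  exact Eventually.of_forall fun t => by simpa using hC t

lemma integrable_norm_deriv {K : NNReal} {τ : ℝ → E2} (hτ : LipschitzWith K τ) (a b : ℝ) :
    IntervalIntegrable (fun t => ‖deriv τ t‖) volume a b := by
  refine intervalIntegrable_of_bounded ((measurable_deriv τ).norm.aestronglyMeasurable) (C := K) (fun t => ?_) a b
  rw [abs_of_nonneg (norm_nonneg _)]; exact norm_deriv_le hτ t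

lemma tendsto_diffquot {K : NNReal} {τ : ℝ → E2} (hτ : LipschitzWith K τ) {a b : ℝ} (hab : a ≤ b) :
    Tendsto (fun n : ℕ => ∫ t in a..b, ‖((1:ℝ)/(n+1))⁻¹ • (τ (t + 1/(n+1)) - τ t)‖)
      atTop (𝓝 (∫ t in a..b, ‖deriv τ t‖)) := by
  have hc : Continuous τ := hτ.continuous
  have hpos : ∀ n : ℕ, (0:ℝ) < 1/(n+1) := fun n => by positivity
  have key : ∀ (n : ℕ) (t : ℝ), ‖((1:ℝ)/(n+1))⁻¹ • (τ (t + 1/(n+1)) - τ t)‖ ≤ K := by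
    intro n t
    rw [norm_smul, norm_inv, Real.norm_eq_abs, abs_of_pos (hpos n)]
    have : ‖τ (t + 1/(n+1)) - τ t‖ ≤ K * (1/(n+1)) := by
      have := hτ.dist_le_mul (t + 1/(n+1)) t
      rw [dist_eq_norm, Real.dist_eq] at this
      simp only [add_sub_cancel_left] at this; rwa [abs_of_pos (hpos n)] at this
    calc ((1:ℝ)/(n+1))⁻¹ * ‖τ (t + 1/(n+1)) - τ t‖
        ≤ ((1:ℝ)/(n+1))⁻¹ * (K * (1/(n+1))) := by
          exact mul_le_mul_of_nonneg_left this (by positivity)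
      _ = K := by field_simp
  simp only [intervalIntegral.integral_of_le hab]
  apply tendsto_integral_of_dominated_convergence (fun _ => (K:ℝ))
  · intro n
    exact ((hc.comp (continuous_id.add continuous_const)).sub hc |>.const_smul (((1:ℝ)/(n+1))⁻¹) |>.norm).aestronglyMeasurable.restrict
  · exact integrable_const _
  · intro n
    exact Eventually.of_forall fun t => by simpa using key n t
  · have hae : ∀ᵐ t : ℝ, DifferentiableAt ℝ τ t := hτ.ae_differentiableAt
    refine ae_restrict_of_ae ?_
    filter_upwards [hae] with t ht
    have hd : Tendsto (fun u : ℝ => u⁻¹ • (τ (t + u) - τ t)) (𝓝[≠] 0) (𝓝 (deriv τ t)) :=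
      ht.hasDerivAt.tendsto_slope_zero
    have hseq : Tendsto (fun n : ℕ => (1:ℝ)/(n+1)) atTop (𝓝[≠] (0:ℝ)) := by
      refine tendsto_nhdsWithin_of_tendsto_nhds_of_eventually_within _
        tendsto_one_div_add_atTop_nhds_zero_nat ?_
      exact Eventually.of_forall fun n => (hpos n).ne'
    exact ((hd.comp hseq).norm)

lemma step1 {K : NNReal} {τ : ℝ → E2} (hτ : LipschitzWith K τ) {a b h : ℝ} (hab : a ≤ b)
    (hh : 0 < h) :
    h * ‖τ b - τ a‖ ≤ (∫ t in a..b, ‖τ (t + h) - τ t‖) + 2 * K * h ^ 2 := by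
  have hc : Continuous τ := hτ.continuous
  have hint : ∀ c d : ℝ, IntervalIntegrable τ volume c d := fun c d =>
    (hc.intervalIntegrable c d)
  -- e1 : ∫_a^b (τ(t+h) - τ t) = ∫_b^{b+h} τ - ∫_a^{a+h} τ
  have e1 : (∫ t in a..b, (τ (t + h) - τ t)) = (∫ t in b..b+h, τ t) - ∫ t in a..a+h, τ t := by
    rw [intervalIntegral.integral_sub ((by continuity : Continuous fun t : ℝ => τ (t + h)).intervalIntegrable a b) (hint a b)]
    rw [intervalIntegral.integral_comp_add_right]
    have A : (∫ t in a+h..a, τ t) + (∫ t in a..b, τ t) = ∫ t in a+h..b, τ t :=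
      integral_add_adjacent_intervals (hint _ _) (hint _ _)
    have B : (∫ t in a+h..b, τ t) + (∫ t in b..b+h, τ t) = ∫ t in a+h..b+h, τ t :=
      integral_add_adjacent_intervals (hint _ _) (hint _ _)
    have C : (∫ t in a+h..a, τ t) = - ∫ t in a..a+h, τ t := integral_symm a (a+h)
    rw [← B, ← A, C]; abel
  -- e2 : ‖∫_c^{c+h} τ - h • τ c‖ ≤ K*h*h
  have e2 : ∀ c : ℝ, ‖(∫ t in c..c+h, τ t) - h • τ c‖ ≤ K * h * h := by
    intro c
    have : (∫ t in c..c+h, τ t) - h • τ c = ∫ t in c..c+h, (τ t - τ c) := by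
      rw [intervalIntegral.integral_sub (hint _ _) (_root_.intervalIntegrable_const)]
      simp [intervalIntegral.integral_const]
    rw [this]
    have := intervalIntegral.norm_integral_le_of_norm_le_const (C := K * h)
      (f := fun t => τ t - τ c) (a := c) (b := c + h) ?_
    · calc ‖∫ t in c..c+h, (τ t - τ c)‖ ≤ K * h * |c + h - c| := this
      _ = K * h * h := by rw [add_sub_cancel_left, abs_of_pos hh]
    · intro x hx
      rw [Set.uIoc_of_le (by linarith)] at hx
      have h1 : dist (τ x) (τ c) ≤ K * dist x c := hτ.dist_le_mul x c
      rw [dist_eq_norm, Real.dist_eq, abs_of_pos (by linarith [hx.1] : (0:ℝ) < x - c)] at h1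
      calc ‖τ x - τ c‖ ≤ K * (x - c) := h1
      _ ≤ K * h := by
          have := hx.2
          exact mul_le_mul_of_nonneg_left (by linarith) K.coe_nonneg
  have e3 : ‖∫ t in a..b, (τ (t + h) - τ t)‖ ≤ ∫ t in a..b, ‖τ (t + h) - τ t‖ :=
    intervalIntegral.norm_integral_le_integral_norm hab
  calc h * ‖τ b - τ a‖ = ‖h • (τ b - τ a)‖ := by
        rw [norm_smul, Real.norm_eq_abs, abs_of_pos hh]
    _ = ‖((∫ t in b..b+h, τ t) - ∫ t in a..a+h, τ t)
          - ((∫ t in b..b+h, τ t) - h • τ b) + ((∫ t in a..a+h, τ t) - h • τ a)‖ := by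
        congr 1
        simp only [smul_sub]
        abel
    _ ≤ ‖(∫ t in b..b+h, τ t) - ∫ t in a..a+h, τ t‖ + ‖(∫ t in b..b+h, τ t) - h • τ b‖
          + ‖(∫ t in a..a+h, τ t) - h • τ a‖ := by
        refine (norm_add_le _ _).trans (add_le_add_left (norm_sub_le _ _) _)
    _ ≤ ‖∫ t in a..b, (τ (t + h) - τ t)‖ + K * h * h + K * h * h := by
        rw [← e1]; exact add_le_add (add_le_add le_rfl (e2 b)) (e2 a)
    _ ≤ (∫ t in a..b, ‖τ (t + h) - τ t‖) + 2 * K * h ^ 2 := by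
        have := e3; nlinarith [e3]

lemma ftc_ineq {K : NNReal} {τ : ℝ → E2} (hτ : LipschitzWith K τ) {a b : ℝ} (hab : a ≤ b) :
    ‖τ b - τ a‖ ≤ ∫ t in a..b, ‖deriv τ t‖ := by
  have hpos : ∀ n : ℕ, (0:ℝ) < 1/(n+1) := fun n => by positivity
  have key : ∀ n : ℕ, ‖τ b - τ a‖ ≤
      (∫ t in a..b, ‖((1:ℝ)/(n+1))⁻¹ • (τ (t + 1/(n+1)) - τ t)‖) + 2 * K * (1/(n+1)) := by
    intro n
    set h : ℝ := 1/(n+1) with hh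
    have h1 := step1 hτ hab (hpos n)
    have h2 : (∫ t in a..b, ‖h⁻¹ • (τ (t + h) - τ t)‖)
        = h⁻¹ * ∫ t in a..b, ‖τ (t + h) - τ t‖ := by
      rw [← intervalIntegral.integral_const_mul]
      congr 1; ext t
      rw [norm_smul, norm_inv, Real.norm_eq_abs, abs_of_pos (hpos n)]
    rw [h2]
    rw [← mul_le_mul_iff_right₀ (hpos n)]
    calc h * ‖τ b - τ a‖ ≤ (∫ t in a..b, ‖τ (t + h) - τ t‖) + 2 * K * h ^ 2 := h1
      _ = h * (h⁻¹ * (∫ t in a..b, ‖τ (t + h) - τ t‖) + 2 * K * h) := by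
          rw [mul_add, ← mul_assoc h h⁻¹, mul_inv_cancel₀ (hpos n).ne', one_mul]; ring
  have hlim : Tendsto (fun n : ℕ =>
      (∫ t in a..b, ‖((1:ℝ)/(n+1))⁻¹ • (τ (t + 1/(n+1)) - τ t)‖) + 2 * K * (1/(n+1)))
      atTop (𝓝 ((∫ t in a..b, ‖deriv τ t‖) + 2 * K * 0)) := by
    exact (tendsto_diffquot hτ hab).add
      ((tendsto_one_div_add_atTop_nhds_zero_nat).const_mul _)
  rw [mul_zero, add_zero] at hlim
  exact ge_of_tendsto' hlim key

lemma lip_bound {K : NNReal} {τ : ℝ → E2} (hτ : LipschitzWith K τ) {h : ℝ} (hh : 0 ≤ h) (t : ℝ) :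
    ‖τ (t + h) - τ t‖ ≤ K * h := by
  have := hτ.dist_le_mul (t + h) t
  rw [dist_eq_norm, Real.dist_eq] at this
  simp only [add_sub_cancel_left] at this
  rwa [abs_of_nonneg hh] at this

lemma exists_good_shift {K : NNReal} {τ : ℝ → E2} (hτ : LipschitzWith K τ)
    {ε δ : ℝ} (hε : 0 < ε) (hδ : 0 < δ) :
    ∃ m : ℕ, 0 < m ∧ (1:ℝ)/m ≤ δ ∧ ∃ s ∈ Icc (0:ℝ) (1/m),
      (∫ t in (0:ℝ)..1, ‖deriv τ t‖) - ε ≤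
        ∑ j ∈ Finset.range (m-1), ‖τ (s + (j+1)*((1:ℝ)/m)) - τ (s + j*((1:ℝ)/m))‖ := by
  have hc : Continuous τ := hτ.continuous
  set L : ℝ := ∫ t in (0:ℝ)..1, ‖deriv τ t‖ with hL
  -- choose n
  have hcpos : (0:ℝ) < min δ (ε/(2*(K+1))) := lt_min hδ (by positivity)
  have hev1 : ∀ᶠ n : ℕ in atTop,
      L - ε/2 ≤ ∫ t in (0:ℝ)..1, ‖((1:ℝ)/(n+1))⁻¹ • (τ (t + 1/(n+1)) - τ t)‖ :=
    (tendsto_diffquot hτ zero_le_one).eventually (eventually_ge_nhds (by linarith))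
  have hev2 : ∀ᶠ n : ℕ in atTop, (1:ℝ)/(n+1) ≤ min δ (ε/(2*(K+1))) :=
    tendsto_one_div_add_atTop_nhds_zero_nat.eventually (eventually_le_nhds hcpos)
  obtain ⟨n, hn1, hn2⟩ := (hev1.and hev2).exists
  set m : ℕ := n + 1 with hm
  have hmcast : ((m:ℕ):ℝ) = (n:ℝ) + 1 := by push_cast [hm]; ring
  set h : ℝ := 1/(m:ℝ) with hh
  have hh' : h = 1/((n:ℝ)+1) := by rw [hh, hmcast]
  have hhpos : 0 < h := by rw [hh']; positivity
  have hhδ : h ≤ δ := le_trans (by rw [hh']; exact hn2) (min_le_left _ _)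
  have hhε : (K:ℝ) * h ≤ ε/2 := by
    have h1 : h ≤ ε/(2*(K+1)) := le_trans (by rw [hh']; exact hn2) (min_le_right _ _)
    have h2 : (K:ℝ) * h ≤ (K:ℝ) * (ε/(2*(K+1))) := mul_le_mul_of_nonneg_left h1 K.coe_nonneg
    have h3 : (K:ℝ) * (ε/(2*(K+1))) ≤ ε/2 := by
      have hK0 : (0:ℝ) ≤ K := K.coe_nonneg
      rw [← mul_div_assoc, div_le_div_iff₀ (by positivity) (by norm_num)]
      nlinarith
    linarith
  have hmh : (m:ℝ) * h = 1 := by rw [hh, mul_one_div_cancel (by rw [hmcast]; positivity)]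
  have hm1h : ((m:ℝ) - 1) * h = 1 - h := by rw [sub_mul, hmh, one_mul]
  -- the function G
  set G : ℝ → ℝ := fun s => ∑ j ∈ Finset.range (m-1),
    ‖τ (s + (j+1)*h) - τ (s + j*h)‖ with hG
  have hGc : Continuous G := by
    apply continuous_finset_sum
    intro j _
    exact ((hc.comp (continuous_id.add continuous_const)).sub
      (hc.comp (continuous_id.add continuous_const))).norm
  -- max of G on [0,h]
  obtain ⟨s, hsmem, hsmax⟩ := isCompact_Icc.exists_isMaxOn (α := ℝ) (β := ℝ)
    ⟨0, le_refl 0, hhpos.le⟩ hGc.continuousOn (s := Icc 0 h)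
  refine ⟨m, Nat.succ_pos n, by rw [← hh]; exact hhδ, s, by rw [← hh]; exact hsmem, ?_⟩
  have goal2 : L - ε ≤ G s := by
    -- Fubini-type identity
    have hfint : ∀ c d e : ℝ, IntervalIntegrable (fun t => ‖τ (t + e) - τ t‖) volume c d := by
      intro c d e
      exact ((hc.comp (continuous_id.add continuous_const)).sub hc).norm.intervalIntegrable c d
    have claim_fub : (∫ u in (0:ℝ)..h, G u) = ∫ t in (0:ℝ)..(1-h), ‖τ (t + h) - τ t‖ := by
      rw [hG]
      rw [intervalIntegral.integral_finset_sum]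
      swap
      · intro j _
        exact (((hc.comp (continuous_id.add continuous_const)).sub
          (hc.comp (continuous_id.add continuous_const))).norm).intervalIntegrable _ _
      have hterm : ∀ j : ℕ, (∫ u in (0:ℝ)..h, ‖τ (u + (j+1)*h) - τ (u + j*h)‖)
          = ∫ t in ((j:ℝ)*h)..(((j:ℕ)+1:ℝ)*h), ‖τ (t + h) - τ t‖ := by
        intro j
        have := intervalIntegral.integral_comp_add_right (a := (0:ℝ)) (b := h)
          (fun t => ‖τ (t + h) - τ t‖) ((j:ℝ)*h)
        rw [zero_add] at this
        have e : ∀ u : ℝ, u + ((j:ℝ)+1)*h = u + (j:ℝ)*h + h := fun u => by ring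
        simp_rw [e]
        rw [this]
        congr 1
        ring
      have hsum := intervalIntegral.sum_integral_adjacent_intervals
        (a := fun j : ℕ => (j:ℝ)*h) (n := m - 1)
        (f := fun t => ‖τ (t + h) - τ t‖) (μ := volume) ?_
      swap
      · intro k _; exact hfint _ _ _
      calc ∑ j ∈ Finset.range (m-1), ∫ u in (0:ℝ)..h, ‖τ (u + (j+1)*h) - τ (u + j*h)‖
          = ∑ j ∈ Finset.range (m-1), ∫ t in ((j:ℝ)*h)..(((j:ℕ)+1:ℝ)*h), ‖τ (t + h) - τ t‖ := by
            exact Finset.sum_congr rfl fun j _ => hterm j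
        _ = ∫ t in ((0:ℕ):ℝ)*h..(((m-1:ℕ):ℝ))*h, ‖τ (t + h) - τ t‖ := by
            rw [← hsum]
            refine Finset.sum_congr rfl fun j _ => ?_
            congr 1
            push_cast
            ring
        _ = ∫ t in (0:ℝ)..(1-h), ‖τ (t + h) - τ t‖ := by
            congr 1
            · norm_num
            · rw [Nat.cast_sub (Nat.one_le_iff_ne_zero.2 (by omega))]
              simpa using hm1h
    -- average bound
    have claim_avg : (∫ u in (0:ℝ)..h, G u) ≤ h * G s := by
      have h1 : (∫ u in (0:ℝ)..h, G u) ≤ ∫ u in (0:ℝ)..h, G s :=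
        intervalIntegral.integral_mono_on hhpos.le (hGc.intervalIntegrable _ _)
          (_root_.intervalIntegrable_const) (fun x hx => hsmax hx)
      rw [intervalIntegral.integral_const, smul_eq_mul, sub_zero] at h1
      exact h1
    -- tail bound
    have claim_tail : (∫ t in (1-h)..1, ‖τ (t + h) - τ t‖) ≤ K * h * h := by
      have hb : ∀ x ∈ Icc (1-h) 1, ‖τ (x + h) - τ x‖ ≤ (K:ℝ)*h := fun x _ =>
        lip_bound hτ hhpos.le x
      have h1 : (∫ t in (1-h)..1, ‖τ (t + h) - τ t‖) ≤ ∫ _ in (1-h)..1, (K:ℝ)*h :=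
        intervalIntegral.integral_mono_on (by linarith) (hfint _ _ _)
          (_root_.intervalIntegrable_const) hb
      rw [intervalIntegral.integral_const, smul_eq_mul] at h1
      calc (∫ t in (1-h)..1, ‖τ (t + h) - τ t‖) ≤ (1 - (1-h)) * ((K:ℝ)*h) := h1
        _ = K * h * h := by ring
    -- split bound
    have claim_split : (∫ t in (0:ℝ)..1, ‖τ (t + h) - τ t‖)
        = (∫ t in (0:ℝ)..(1-h), ‖τ (t + h) - τ t‖) + ∫ t in (1-h)..1, ‖τ (t + h) - τ t‖ :=
      (intervalIntegral.integral_add_adjacent_intervals (hfint _ _ _) (hfint _ _ _)).symm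
    -- lower bound on full integral from hn1
    have claim_low : h * (L - ε/2) ≤ ∫ t in (0:ℝ)..1, ‖τ (t + h) - τ t‖ := by
      have h2 : (∫ t in (0:ℝ)..1, ‖((1:ℝ)/(n+1))⁻¹ • (τ (t + 1/(n+1)) - τ t)‖)
          = h⁻¹ * ∫ t in (0:ℝ)..1, ‖τ (t + h) - τ t‖ := by
        rw [← intervalIntegral.integral_const_mul]
        congr 1
        ext t
        rw [norm_smul, norm_inv, Real.norm_eq_abs, hh']
        rw [abs_of_pos (by positivity)]
      rw [h2] at hn1
      have := mul_le_mul_of_nonneg_left hn1 hhpos.le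
      calc h * (L - ε/2) ≤ h * (h⁻¹ * ∫ t in (0:ℝ)..1, ‖τ (t + h) - τ t‖) := this
        _ = ∫ t in (0:ℝ)..1, ‖τ (t + h) - τ t‖ := by
            rw [← mul_assoc, mul_inv_cancel₀ hhpos.ne', one_mul]
    -- combine
    have final : h * (L - ε) ≤ h * G s := by
      calc h * (L - ε) = h * (L - ε/2) - h * (ε/2) := by ring
        _ ≤ (∫ t in (0:ℝ)..1, ‖τ (t + h) - τ t‖) - K * h * h := by
            have e : h * ((K:ℝ) * h) = (K:ℝ) * h * h := by ring
            have h5 : (K:ℝ) * h * h ≤ h * (ε/2) := by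
              rw [← e]; exact mul_le_mul_of_nonneg_left hhε hhpos.le
            linarith [claim_low]
        _ ≤ (∫ t in (0:ℝ)..(1-h), ‖τ (t + h) - τ t‖) := by
            rw [claim_split]; linarith [claim_tail]
        _ = ∫ u in (0:ℝ)..h, G u := claim_fub.symm
        _ ≤ h * G s := claim_avg
    exact le_of_mul_le_mul_left final hhpos
  exact goal2
end WLSS

end

set_option maxHeartbeats 2000000 in
/-- the weighted length equals the supremum over subdivisions. -/
theorem weighted_length_eq_sup_subdivisions
    (Ωb : Set E2) (hΩc : IsCompact Ωb) (hΩconv : Convex ℝ Ωb)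
    (φ : E2 → ℝ) (hφ : ContinuousOn φ Ωb) (hφ0 : ∀ x ∈ Ωb, 0 ≤ φ x)
    (σ : ℝ → E2) (hσ : IsCurveIn Ωb σ) :
    Lw φ σ = sSup {s : ℝ | ∃ n : ℕ, ∃ t : ℕ → ℝ, 0 < n ∧ t 0 = 0 ∧ t n = 1 ∧
      (∀ i < n, t i ≤ t (i + 1)) ∧
      s = ∑ i ∈ Finset.range n,
        sInf ((fun u => φ (σ u)) '' Icc (t i) (t (i + 1))) * ‖σ (t (i + 1)) - σ (t i)‖} := by
  classical
  obtain ⟨⟨K, hK⟩, hmem⟩ := hσ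
  set S := {s : ℝ | ∃ n : ℕ, ∃ t : ℕ → ℝ, 0 < n ∧ t 0 = 0 ∧ t n = 1 ∧
      (∀ i < n, t i ≤ t (i + 1)) ∧
      s = ∑ i ∈ Finset.range n,
        sInf ((fun u => φ (σ u)) '' Icc (t i) (t (i + 1))) * ‖σ (t (i + 1)) - σ (t i)‖} with hS
  -- globally Lipschitz extension
  set π : ℝ → ℝ := fun t => (Set.projIcc (0:ℝ) 1 zero_le_one t : ℝ) with hπ
  have hπmem : ∀ t, π t ∈ Icc (0:ℝ) 1 := fun t => (Set.projIcc 0 1 zero_le_one t).2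
  set τ : ℝ → E2 := fun t => σ (π t) with hτdef
  have hπlip : LipschitzWith 1 π := by
    have h1 := LipschitzWith.projIcc (a := (0:ℝ)) (b := 1) zero_le_one
    have h2 := LipschitzWith.subtype_val (Icc (0:ℝ) 1)
    have h3 := h2.comp h1
    rw [one_mul] at h3
    exact h3
  have hτlip : LipschitzWith K τ := by
    intro x y
    calc edist (τ x) (τ y) ≤ K * edist (π x) (π y) := hK (hπmem x) (hπmem y)
      _ ≤ K * edist x y := by
          have := hπlip x y
          simpa using mul_le_mul_right this K
  have heq : ∀ t ∈ Icc (0:ℝ) 1, τ t = σ t := by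
    intro t ht
    simp only [hτdef, hπ, Set.projIcc_of_mem zero_le_one ht]
  have hτmem : ∀ t, τ t ∈ Ωb := fun t => hmem _ (hπmem t)
  set ψ : ℝ → ℝ := fun t => φ (τ t) with hψdef
  have hψc : Continuous ψ := hφ.comp_continuous hτlip.continuous hτmem
  obtain ⟨M, hM⟩ := hΩc.exists_bound_of_continuousOn hφ
  set M' : ℝ := max M 0 with hM'
  have hM'0 : 0 ≤ M' := le_max_right _ _
  have hψle : ∀ t, ψ t ≤ M' := fun t =>
    le_trans (le_trans (le_abs_self _) (by simpa [Real.norm_eq_abs] using hM _ (hτmem t)))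
      (le_max_left _ _)
  have hψ0 : ∀ t, 0 ≤ ψ t := fun t => hφ0 _ (hτmem t)
  have hderiv_eq : ∀ t ∈ Ioo (0:ℝ) 1, deriv σ t = deriv τ t := by
    intro t ht
    apply Filter.EventuallyEq.deriv_eq
    filter_upwards [Ioo_mem_nhds ht.1 ht.2] with u hu
    exact (heq u (Ioo_subset_Icc_self hu)).symm
  have hae1 : ∀ᵐ x : ℝ, x ≠ (1:ℝ) := by
    rw [ae_iff]
    simp only [ne_eq, not_not, setOf_eq_eq_singleton]
    exact Real.volume_singleton
  have hLw : Lw φ σ = ∫ t in (0:ℝ)..1, ψ t * ‖deriv τ t‖ := by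
    unfold Lw
    apply intervalIntegral.integral_congr_ae
    filter_upwards [hae1] with t ht1 htmem
    rw [Set.uIoc_of_le (zero_le_one)] at htmem
    have ht' : t ∈ Ioo (0:ℝ) 1 := ⟨htmem.1, lt_of_le_of_ne htmem.2 ht1⟩
    rw [hψdef]
    simp only []
    rw [heq t (Ioo_subset_Icc_self ht'), hderiv_eq t ht']
  have hψd_int : ∀ a b : ℝ, IntervalIntegrable (fun t => ψ t * ‖deriv τ t‖) volume a b := by
    intro a b
    refine WLSS.intervalIntegrable_of_bounded
      ((hψc.measurable.mul (measurable_deriv τ).norm).aestronglyMeasurable) (C := M' * K)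
      (fun t => ?_) a b
    show |ψ t * ‖deriv τ t‖| ≤ M' * K
    rw [abs_of_nonneg (mul_nonneg (hψ0 t) (norm_nonneg _))]
    exact mul_le_mul (hψle t) (WLSS.norm_deriv_le hτlip t) (norm_nonneg _) hM'0
  have hd_int := WLSS.integrable_norm_deriv hτlip
  set L : ℝ := ∫ t in (0:ℝ)..1, ‖deriv τ t‖ with hLdef
  have hL0 : 0 ≤ L :=
    intervalIntegral.integral_nonneg zero_le_one (fun u _ => norm_nonneg _)
  -- upper bound
  have hub : ∀ s ∈ S, s ≤ Lw φ σ := by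
    rintro s ⟨n, t, hn, ht0, htn, hmono, rfl⟩
    have hmono' : ∀ i j, i ≤ j → j ≤ n → t i ≤ t j := by
      intro i j hij hjn
      induction j with
      | zero => rw [Nat.le_zero.mp hij]
      | succ k ih =>
        rcases Nat.lt_or_ge i (k+1) with hlt | hge
        · exact le_trans (ih (Nat.lt_succ_iff.mp hlt) (by omega)) (hmono k (by omega))
        · rw [le_antisymm hij hge]
    have hmem01 : ∀ i, i ≤ n → t i ∈ Icc (0:ℝ) 1 := fun i hi =>
      ⟨ht0 ▸ hmono' 0 i (Nat.zero_le _) hi, htn ▸ hmono' i n hi le_rfl⟩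
    have hterm : ∀ i < n,
        sInf ((fun u => φ (σ u)) '' Icc (t i) (t (i + 1))) * ‖σ (t (i + 1)) - σ (t i)‖
          ≤ ∫ u in (t i)..(t (i+1)), ψ u * ‖deriv τ u‖ := by
      intro i hi
      have hsub : Icc (t i) (t (i+1)) ⊆ Icc (0:ℝ) 1 := by
        intro u hu
        exact ⟨le_trans (hmem01 i (by omega)).1 hu.1, le_trans hu.2 (hmem01 (i+1) (by omega)).2⟩
      have himg : (fun u => φ (σ u)) '' Icc (t i) (t (i + 1)) = ψ '' Icc (t i) (t (i + 1)) :=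
        (Set.image_congr (fun u hu => by rw [hψdef]; simp only []; rw [heq u (hsub hu)])).symm
      have hne : (ψ '' Icc (t i) (t (i + 1))).Nonempty :=
        ⟨ψ (t i), ⟨t i, ⟨le_rfl, hmono i hi⟩, rfl⟩⟩
      have hbdd : BddBelow (ψ '' Icc (t i) (t (i + 1))) := by
        refine ⟨0, ?_⟩
        rintro v ⟨u, hu, rfl⟩
        exact hψ0 u
      set mi := sInf (ψ '' Icc (t i) (t (i + 1))) with hmi
      have hmi0 : 0 ≤ mi := le_csInf hne (by rintro v ⟨u, hu, rfl⟩; exact hψ0 u)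
      have hσeq : σ (t (i+1)) - σ (t i) = τ (t (i+1)) - τ (t i) := by
        rw [heq _ (hmem01 (i+1) (by omega)), heq _ (hmem01 i (by omega))]
      rw [himg, hσeq, ← hmi]
      calc mi * ‖τ (t (i + 1)) - τ (t i)‖
          ≤ mi * ∫ u in (t i)..(t (i+1)), ‖deriv τ u‖ :=
            mul_le_mul_of_nonneg_left (WLSS.ftc_ineq hτlip (hmono i hi)) hmi0
        _ = ∫ u in (t i)..(t (i+1)), mi * ‖deriv τ u‖ :=
            (intervalIntegral.integral_const_mul _ _).symm
        _ ≤ ∫ u in (t i)..(t (i+1)), ψ u * ‖deriv τ u‖ := by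
            refine intervalIntegral.integral_mono_on (hmono i hi)
              ((hd_int _ _).const_mul _) (hψd_int _ _) (fun u hu => ?_)
            exact mul_le_mul_of_nonneg_right (csInf_le hbdd ⟨u, hu, rfl⟩) (norm_nonneg _)
    calc ∑ i ∈ Finset.range n,
        sInf ((fun u => φ (σ u)) '' Icc (t i) (t (i + 1))) * ‖σ (t (i + 1)) - σ (t i)‖
        ≤ ∑ i ∈ Finset.range n, ∫ u in (t i)..(t (i+1)), ψ u * ‖deriv τ u‖ :=
          Finset.sum_le_sum fun i hi => hterm i (Finset.mem_range.mp hi)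
      _ = ∫ u in (t 0)..(t n), ψ u * ‖deriv τ u‖ :=
          intervalIntegral.sum_integral_adjacent_intervals fun k _ => hψd_int _ _
      _ = Lw φ σ := by rw [ht0, htn, hLw]
  -- nonempty
  have hne : S.Nonempty := by
    refine ⟨sInf ((fun u => φ (σ u)) '' Icc ((fun i : ℕ => (i:ℝ)) 0) ((fun i : ℕ => (i:ℝ)) 1))
      * ‖σ ((fun i : ℕ => (i:ℝ)) 1) - σ ((fun i : ℕ => (i:ℝ)) 0)‖, 1, fun i : ℕ => (i:ℝ),
      one_pos, by norm_num, by norm_num, fun i _ => by push_cast; linarith, ?_⟩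
    rw [Finset.sum_range_one]
  -- lower bound
  have key : ∀ ε : ℝ, 0 < ε → ∃ s ∈ S, Lw φ σ - ε ≤ s := by
    intro ε hε
    set ε' : ℝ := ε/(2*(L+1)) with hε'def
    have hε'pos : 0 < ε' := by rw [hε'def]; positivity
    set εv : ℝ := ε/(2*(M'+1)) with hεvdef
    have hεvpos : 0 < εv := by rw [hεvdef]; positivity
    have hUC := (isCompact_Icc (a := (0:ℝ)) (b := 1)).uniformContinuousOn_of_continuous
      hψc.continuousOn
    obtain ⟨δ, hδpos, hδ⟩ := Metric.uniformContinuousOn_iff_le.mp hUC ε' hε'pos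
    obtain ⟨m, hmpos, hmδ, s0, hs0mem, hs0⟩ := WLSS.exists_good_shift hτlip hεvpos hδpos
    set h : ℝ := 1/(m:ℝ) with hh
    rw [← hLdef] at hs0
    have hm1 : (1:ℝ) ≤ (m:ℝ) := by exact_mod_cast hmpos
    have hhpos : 0 < h := by rw [hh]; positivity
    have hmh : (m:ℝ) * h = 1 := by rw [hh]; field_simp
    have hs00 : 0 ≤ s0 := hs0mem.1
    have hs0h : s0 ≤ h := hs0mem.2
    have hhδ : h ≤ δ := hmδ
    set t : ℕ → ℝ := fun i => if i = 0 then 0 else min 1 (s0 + ((i:ℝ) - 1) * h) with ht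
    have ht0 : t 0 = 0 := by simp [ht]
    have htv : ∀ i : ℕ, 1 ≤ i → i ≤ m → t i = s0 + ((i:ℝ) - 1) * h := by
      intro i h1 h2
      rw [ht]; simp only [if_neg (by omega : ¬ i = 0)]
      refine min_eq_right ?_
      have h3 : (i:ℝ) ≤ (m:ℝ) := by exact_mod_cast h2
      calc s0 + ((i:ℝ) - 1) * h ≤ h + ((i:ℝ)-1)*h := by linarith
        _ = (i:ℝ) * h := by ring
        _ ≤ (m:ℝ) * h := by nlinarith
        _ = 1 := hmh
    have htlast : t (m+1) = 1 := by
      rw [ht]; simp only [if_neg (by omega : ¬ m+1 = 0)]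
      refine min_eq_left ?_
      push_cast
      have e : ((m:ℝ) + 1 - 1) * h = 1 := by rw [show (m:ℝ)+1-1 = (m:ℝ) by ring, hmh]
      linarith
    have htmono : ∀ i, t i ≤ t (i+1) := by
      intro i
      rcases Nat.eq_zero_or_pos i with h0 | h0
      · subst h0
        rw [ht0, ht]; simp only [if_neg (by omega : ¬ (0+1) = 0)]
        refine le_min zero_le_one ?_
        push_cast; nlinarith
      · rw [ht]; simp only [if_neg (by omega : ¬ i = 0), if_neg (by omega : ¬ i+1 = 0)]
        refine min_le_min le_rfl ?_
        push_cast; nlinarith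
    have hminlem : ∀ x : ℝ, min 1 (x + h) - min 1 x ≤ h := by
      intro x
      rcases le_total x 1 with hx | hx
      · rw [min_eq_right hx]
        linarith [min_le_right 1 (x+h)]
      · rw [min_eq_left hx]
        linarith [min_le_left 1 (x+h)]
    have htmesh : ∀ i, t (i+1) - t i ≤ h := by
      intro i
      rcases Nat.eq_zero_or_pos i with h0 | h0
      · subst h0
        rw [ht0, ht]; simp only [if_neg (by omega : ¬ (0+1) = 0)]
        push_cast
        have := min_le_right (1:ℝ) (s0 + (1-1)*h)
        nlinarith
      · rw [ht]; simp only [if_neg (by omega : ¬ i = 0), if_neg (by omega : ¬ i+1 = 0)]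
        push_cast
        have e2 : s0 + ((i:ℝ)+1-1)*h = (s0 + ((i:ℝ)-1)*h) + h := by ring
        rw [e2]
        exact hminlem _
    have htmem01 : ∀ i, t i ∈ Icc (0:ℝ) 1 := by
      intro i
      rcases Nat.eq_zero_or_pos i with h0 | h0
      · subst h0; rw [ht0]; exact ⟨le_rfl, zero_le_one⟩
      · rw [ht]; simp only [if_neg (by omega : ¬ i = 0)]
        constructor
        · refine le_min zero_le_one ?_
          have h1 : (1:ℝ) ≤ (i:ℝ) := by exact_mod_cast h0
          nlinarith
        · exact min_le_left _ _
    -- partition sum lower bound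
    have hsum_lb : L - εv ≤ ∑ i ∈ Finset.range (m+1), ‖τ (t (i+1)) - τ (t i)‖ := by
      refine le_trans hs0 ?_
      have hre : ∑ j ∈ Finset.range (m-1), ‖τ (s0 + (j+1)*h) - τ (s0 + j*h)‖
          = ∑ i ∈ Finset.Ico 1 m, ‖τ (t (i+1)) - τ (t i)‖ := by
        rw [Finset.sum_Ico_eq_sum_range]
        refine Finset.sum_congr rfl fun j hj => ?_
        have hj' : j < m - 1 := Finset.mem_range.mp hj
        have e1 : t (1+j) = s0 + (j:ℝ)*h := by
          rw [htv (1+j) (by omega) (by omega)]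
          congr 1
          push_cast; ring
        have e2 : t (1+j+1) = s0 + ((j:ℝ)+1)*h := by
          rw [htv (1+j+1) (by omega) (by omega)]
          congr 1
          push_cast; ring
        rw [e1, e2]
      rw [hre]
      refine Finset.sum_le_sum_of_subset_of_nonneg ?_ (fun i _ _ => norm_nonneg _)
      intro x hx
      simp only [Finset.mem_Ico, Finset.mem_range] at hx ⊢
      omega
    -- per-interval quantities
    set mi : ℕ → ℝ := fun i => sInf (ψ '' Icc (t i) (t (i+1))) with hmi
    have hne_i : ∀ i, (ψ '' Icc (t i) (t (i+1))).Nonempty :=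
      fun i => ⟨ψ (t i), ⟨t i, ⟨le_rfl, htmono i⟩, rfl⟩⟩
    have hbdd_i : ∀ i, BddBelow (ψ '' Icc (t i) (t (i+1))) := by
      intro i
      refine ⟨0, ?_⟩
      rintro v ⟨u, hu, rfl⟩
      exact hψ0 u
    have hmi0 : ∀ i, 0 ≤ mi i :=
      fun i => le_csInf (hne_i i) (by rintro v ⟨u, hu, rfl⟩; exact hψ0 u)
    have hmiM : ∀ i, mi i ≤ M' := fun i =>
      le_trans (csInf_le (hbdd_i i) ⟨t i, ⟨le_rfl, htmono i⟩, rfl⟩) (hψle (t i))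
    have hIccsub : ∀ i, Icc (t i) (t (i+1)) ⊆ Icc (0:ℝ) 1 := by
      intro i u hu
      exact ⟨le_trans (htmem01 i).1 hu.1, le_trans hu.2 (htmem01 (i+1)).2⟩
    have hup : ∀ i, ∀ u ∈ Icc (t i) (t (i+1)), ψ u ≤ mi i + ε' := by
      intro i u hu
      have h1 : ψ u - ε' ≤ mi i := by
        refine le_csInf (hne_i i) ?_
        rintro v ⟨w, hw, rfl⟩
        have hdist : dist u w ≤ δ := by
          rw [Real.dist_eq, abs_sub_le_iff]
          constructor
          · linarith [hu.1, hu.2, hw.1, hw.2, htmesh i, hhδ]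
          · linarith [hu.1, hu.2, hw.1, hw.2, htmesh i, hhδ]
        have := hδ u (hIccsub i hu) w (hIccsub i hw) hdist
        rw [Real.dist_eq] at this
        have := le_trans (le_abs_self (ψ u - ψ w)) this
        linarith
      linarith
    -- main chain
    have hadj : ∀ (f : ℝ → ℝ), (∀ a b : ℝ, IntervalIntegrable f volume a b) →
        ∑ i ∈ Finset.range (m+1), (∫ u in (t i)..(t (i+1)), f u) = ∫ u in (0:ℝ)..1, f u := by
      intro f hf
      rw [intervalIntegral.sum_integral_adjacent_intervals fun k _ => hf _ _, ht0, htlast]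
    have hS2 : ∀ i, (∫ u in (t i)..(t (i+1)), ψ u * ‖deriv τ u‖)
        ≤ mi i * (∫ u in (t i)..(t (i+1)), ‖deriv τ u‖)
          + ε' * ∫ u in (t i)..(t (i+1)), ‖deriv τ u‖ := by
      intro i
      have h1 : (∫ u in (t i)..(t (i+1)), ψ u * ‖deriv τ u‖)
          ≤ ∫ u in (t i)..(t (i+1)), (mi i + ε') * ‖deriv τ u‖ := by
        refine intervalIntegral.integral_mono_on (htmono i) (hψd_int _ _)
          ((hd_int _ _).const_mul _) (fun u hu => ?_)
        exact mul_le_mul_of_nonneg_right (hup i u hu) (norm_nonneg _)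
      rw [intervalIntegral.integral_const_mul] at h1
      linarith [h1]
    have hint_nonneg : ∀ i, 0 ≤ ∫ u in (t i)..(t (i+1)), ‖deriv τ u‖ :=
      fun i => intervalIntegral.integral_nonneg (htmono i) (fun u _ => norm_nonneg _)
    have hS4 : ∑ i ∈ Finset.range (m+1), mi i * (∫ u in (t i)..(t (i+1)), ‖deriv τ u‖)
        ≤ (∑ i ∈ Finset.range (m+1), mi i * ‖τ (t (i+1)) - τ (t i)‖) + M' * εv := by
      have hterm2 : ∀ i, mi i * (∫ u in (t i)..(t (i+1)), ‖deriv τ u‖)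
          - mi i * ‖τ (t (i+1)) - τ (t i)‖
          ≤ M' * ((∫ u in (t i)..(t (i+1)), ‖deriv τ u‖) - ‖τ (t (i+1)) - τ (t i)‖) := by
        intro i
        have hpos2 : 0 ≤ (∫ u in (t i)..(t (i+1)), ‖deriv τ u‖) - ‖τ (t (i+1)) - τ (t i)‖ := by
          have := WLSS.ftc_ineq hτlip (htmono i)
          linarith
        have := mul_le_mul_of_nonneg_right (hmiM i) hpos2
        nlinarith [this]
      have hsum2 : ∑ i ∈ Finset.range (m+1),
          (mi i * (∫ u in (t i)..(t (i+1)), ‖deriv τ u‖) - mi i * ‖τ (t (i+1)) - τ (t i)‖)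
          ≤ ∑ i ∈ Finset.range (m+1),
            M' * ((∫ u in (t i)..(t (i+1)), ‖deriv τ u‖) - ‖τ (t (i+1)) - τ (t i)‖) :=
        Finset.sum_le_sum fun i _ => hterm2 i
      rw [Finset.sum_sub_distrib] at hsum2
      rw [← Finset.mul_sum, Finset.sum_sub_distrib, hadj _ hd_int, ← hLdef] at hsum2
      have hfinal : M' * (L - ∑ i ∈ Finset.range (m+1), ‖τ (t (i+1)) - τ (t i)‖) ≤ M' * εv := by
        refine mul_le_mul_of_nonneg_left ?_ hM'0
        linarith [hsum_lb]
      linarith [hsum2, hfinal]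
    have hchain : Lw φ σ ≤ (∑ i ∈ Finset.range (m+1), mi i * ‖τ (t (i+1)) - τ (t i)‖)
        + ε' * L + M' * εv := by
      calc Lw φ σ = ∑ i ∈ Finset.range (m+1), ∫ u in (t i)..(t (i+1)), ψ u * ‖deriv τ u‖ := by
            rw [hLw, ← hadj _ hψd_int]
        _ ≤ ∑ i ∈ Finset.range (m+1), (mi i * (∫ u in (t i)..(t (i+1)), ‖deriv τ u‖)
              + ε' * ∫ u in (t i)..(t (i+1)), ‖deriv τ u‖) :=
            Finset.sum_le_sum fun i _ => hS2 i
        _ = (∑ i ∈ Finset.range (m+1), mi i * (∫ u in (t i)..(t (i+1)), ‖deriv τ u‖))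
              + ε' * L := by
            rw [Finset.sum_add_distrib, ← Finset.mul_sum, hadj _ hd_int, ← hLdef]
        _ ≤ (∑ i ∈ Finset.range (m+1), mi i * ‖τ (t (i+1)) - τ (t i)‖) + M' * εv + ε' * L := by
            linarith [hS4]
        _ = (∑ i ∈ Finset.range (m+1), mi i * ‖τ (t (i+1)) - τ (t i)‖) + ε' * L + M' * εv := by
            ring
    have hfin1 : ε' * L ≤ ε/2 := by
      rw [hε'def, div_mul_eq_mul_div, div_le_div_iff₀ (by positivity) two_pos]
      nlinarith [hL0, hε.le]
    have hfin2 : M' * εv ≤ ε/2 := by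
      rw [hεvdef, ← mul_div_assoc, div_le_div_iff₀ (by positivity) two_pos]
      nlinarith [hM'0, hε.le]
    -- conversion to σ-form
    have hconv : ∀ i, sInf ((fun u => φ (σ u)) '' Icc (t i) (t (i+1)))
        * ‖σ (t (i+1)) - σ (t i)‖ = mi i * ‖τ (t (i+1)) - τ (t i)‖ := by
      intro i
      have himg : (fun u => φ (σ u)) '' Icc (t i) (t (i + 1)) = ψ '' Icc (t i) (t (i + 1)) :=
        (Set.image_congr (fun u hu => by rw [hψdef]; simp only []
                                         rw [heq u (hIccsub i hu)])).symm
      have hσeq : σ (t (i+1)) - σ (t i) = τ (t (i+1)) - τ (t i) := by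
        rw [heq _ (htmem01 (i+1)), heq _ (htmem01 i)]
      rw [himg, hσeq, hmi]
    refine ⟨∑ i ∈ Finset.range (m+1),
      sInf ((fun u => φ (σ u)) '' Icc (t i) (t (i+1))) * ‖σ (t (i+1)) - σ (t i)‖,
      ⟨m+1, t, by omega, ht0, htlast, fun i _ => htmono i, rfl⟩, ?_⟩
    have hsum_eq : ∑ i ∈ Finset.range (m+1),
        sInf ((fun u => φ (σ u)) '' Icc (t i) (t (i+1))) * ‖σ (t (i+1)) - σ (t i)‖
        = ∑ i ∈ Finset.range (m+1), mi i * ‖τ (t (i+1)) - τ (t i)‖ :=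
      Finset.sum_congr rfl fun i _ => hconv i
    rw [hsum_eq]
    linarith [hchain, hfin1, hfin2]
  refine le_antisymm ?_ (csSup_le hne hub)
  refine le_of_forall_pos_le_add ?_
  intro ε hε
  obtain ⟨s, hs, hls⟩ := key ε hε
  calc Lw φ σ ≤ s + ε := by linarith
    _ ≤ sSup S + ε := by
        have := le_csSup ⟨Lw φ σ, hub⟩ hs
        linarith
end
end

section
/- Under the assumptions of the congested transport problem (H convex, nondecreasing, differentiable on ℝ₊, H(0)=0, with a z^q ≤ H(z) ≤ b(z^q+1) and 0 ≤ H'(z) ≤ c(z^{q-1}+1)), a measure Q̄ ∈ Q^q(μ₀,μ₁) minimizes Q ↦ ∫_Ω H(i_Q) if and only if, setting ξ̄ := H'(i_{Q̄}) ∈ L^{q*}, one has ∫_Ω ξ̄ i_{Q̄} = inf { ∫_Ω ξ̄ i_Q : Q ∈ Q^q(μ₀,μ₁) }. -/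
open MeasureTheory Set Filter Topology
noncomputable section

/-! ### Auxiliary lemmas -/

section Aux

lemma measurableSet_curveSet (Ωb : Set E2) (hcl : IsClosed Ωb) :
    MeasurableSet {σ : Curves | IsCurveIn Ωb ⇑σ} := by
  have heq : {σ : Curves | IsCurveIn Ωb ⇑σ} =
      (⋃ n : ℕ, {σ : Curves | LipschitzOnWith (n : NNReal) (⇑σ) (Icc 0 1)}) ∩
      {σ : Curves | ∀ t ∈ Icc (0:ℝ) 1, σ t ∈ Ωb} := by
    ext σ
    simp only [mem_setOf_eq, mem_inter_iff, mem_iUnion, IsCurveIn]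
    constructor
    · rintro ⟨⟨K, hK⟩, hmem⟩
      refine ⟨⟨⌈(K:ℝ)⌉₊, fun x hx y hy => (hK hx hy).trans ?_⟩, hmem⟩
      gcongr
      have : (K:ℝ) ≤ (⌈(K:ℝ)⌉₊ : ℝ) := Nat.le_ceil _
      exact_mod_cast this
    · rintro ⟨⟨n, hn⟩, hmem⟩
      exact ⟨⟨n, hn⟩, hmem⟩
  rw [heq]
  refine MeasurableSet.inter (MeasurableSet.iUnion fun n => ?_) ?_
  · refine IsClosed.measurableSet ?_
    have : {σ : Curves | LipschitzOnWith (n : NNReal) (⇑σ) (Icc 0 1)} =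
        ⋂ x ∈ Icc (0:ℝ) 1, ⋂ y ∈ Icc (0:ℝ) 1,
          {σ : Curves | dist (σ x) (σ y) ≤ ((n : NNReal) : ℝ) * dist x y} := by
      ext σ
      rw [mem_setOf_eq, lipschitzOnWith_iff_dist_le_mul]
      simp only [mem_iInter, mem_setOf_eq]
    rw [this]
    exact isClosed_biInter fun x hx => isClosed_biInter fun y hy =>
      isClosed_le (by fun_prop) (by fun_prop)
  · refine IsClosed.measurableSet ?_
    have : {σ : Curves | ∀ t ∈ Icc (0:ℝ) 1, σ t ∈ Ωb} =
        ⋂ t ∈ Icc (0:ℝ) 1, {σ : Curves | σ t ∈ Ωb} := by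
      ext σ; simp
    rw [this]
    exact isClosed_biInter fun t ht => hcl.preimage (continuous_eval_const t)

lemma lw_stronglyMeasurable (φ : C(E2, ℝ)) :
    StronglyMeasurable (fun σ : Curves => Lw (⇑φ) ⇑σ) := by
  have hev : Continuous (Function.uncurry fun σ : Curves => ⇑σ) := continuous_eval
  have h1 : StronglyMeasurable (fun p : Curves × ℝ => deriv (⇑p.1) p.2) :=
    stronglyMeasurable_deriv_with_param hev
  have h2 : StronglyMeasurable (fun p : Curves × ℝ => φ (p.1 p.2) * ‖deriv (⇑p.1) p.2‖) :=
    ((φ.continuous.comp continuous_eval).stronglyMeasurable).mul h1.norm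
  have h3 := h2.integral_prod_right' (ν := volume.restrict (Ioc (0:ℝ) 1))
  have heq : (fun σ : Curves => Lw (⇑φ) ⇑σ)
      = fun σ : Curves => ∫ t, φ (σ t) * ‖deriv (⇑σ) t‖ ∂(volume.restrict (Ioc (0:ℝ) 1)) := by
    funext σ
    simp [Lw, intervalIntegral.integral_of_le (zero_le_one (α := ℝ))]
  rw [heq]
  exact h3

lemma lw_const_one (σ : ℝ → E2) : Lw (⇑(ContinuousMap.const E2 (1:ℝ))) σ = len σ := by
  simp [Lw, len]

lemma len_stronglyMeasurable : StronglyMeasurable (fun σ : Curves => len ⇑σ) := by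
  have h := lw_stronglyMeasurable (ContinuousMap.const E2 (1:ℝ))
  simpa only [lw_const_one] using h

lemma norm_deriv_le_of_lip {σ : ℝ → E2} {K : NNReal} (hK : LipschitzOnWith K σ (Icc 0 1))
    {t : ℝ} (ht : t ∈ Ioo (0:ℝ) 1) : ‖deriv σ t‖ ≤ K := by
  by_cases hd : DifferentiableAt ℝ σ t
  · have h1 : HasFDerivAt σ (fderiv ℝ σ t) t := hd.hasFDerivAt
    have h2 : ‖fderiv ℝ σ t‖ ≤ K := h1.le_of_lipschitzOn (Icc_mem_nhds ht.1 ht.2) hK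
    have h3 : deriv σ t = fderiv ℝ σ t 1 := (fderiv_apply_one_eq_deriv).symm
    rw [h3]
    calc ‖fderiv ℝ σ t 1‖ ≤ ‖fderiv ℝ σ t‖ * ‖(1:ℝ)‖ := (fderiv ℝ σ t).le_opNorm 1
    _ ≤ K := by simpa using h2
  · simp [deriv_zero_of_not_differentiableAt hd, NNReal.coe_nonneg]

lemma ae_mem_Ioo : ∀ᵐ t ∂(volume.restrict (Ioc (0:ℝ) 1)), t ∈ Ioo (0:ℝ) 1 := by
  have h1 : (volume.restrict (Ioc (0:ℝ) 1)) ({1} : Set ℝ) = 0 := by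
    rw [Measure.restrict_apply (measurableSet_singleton 1)]
    exact le_antisymm ((measure_mono inter_subset_left).trans (by simp)) (zero_le)
  have h2 : ∀ᵐ t ∂(volume.restrict (Ioc (0:ℝ) 1)), t ≠ 1 := by
    rw [ae_iff]
    convert h1 using 2
    ext t; simp
  filter_upwards [ae_restrict_mem measurableSet_Ioc, h2] with t ht hne
  exact ⟨ht.1, lt_of_le_of_ne ht.2 hne⟩

lemma norm_deriv_integrable {σ : ℝ → E2} {K : NNReal} (hK : LipschitzOnWith K σ (Icc 0 1)) :
    Integrable (fun t => ‖deriv σ t‖) (volume.restrict (Ioc (0:ℝ) 1)) := by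
  refine Integrable.mono' (integrable_const (K : ℝ))
    (measurable_deriv σ).norm.aestronglyMeasurable ?_
  filter_upwards [ae_mem_Ioo] with t ht
  simpa using norm_deriv_le_of_lip hK ht

lemma len_nonneg (σ : ℝ → E2) : 0 ≤ len σ := by
  rw [len, intervalIntegral.integral_of_le zero_le_one]
  exact integral_nonneg fun t => norm_nonneg _

lemma lw_le {Ωb : Set E2} {φ : E2 → ℝ} {M : ℝ} (hM : ∀ x ∈ Ωb, |φ x| ≤ M)
    {σ : ℝ → E2} (hσ : IsCurveIn Ωb σ) : |Lw φ σ| ≤ M * len σ := by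
  obtain ⟨⟨K, hK⟩, hmem⟩ := hσ
  rw [Lw, len, intervalIntegral.integral_of_le zero_le_one,
    intervalIntegral.integral_of_le zero_le_one, ← Real.norm_eq_abs,
    ← MeasureTheory.integral_const_mul]
  refine norm_integral_le_of_norm_le (((norm_deriv_integrable hK)).const_mul M) ?_
  filter_upwards [ae_restrict_mem measurableSet_Ioc] with t ht
  have h1 : |φ (σ t)| ≤ M := hM _ (hmem t ⟨le_of_lt ht.1, ht.2⟩)
  rw [Real.norm_eq_abs, abs_mul, abs_norm]
  exact mul_le_mul_of_nonneg_right h1 (norm_nonneg _)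

variable {H : ℝ → ℝ}

lemma quotient_le (hHconv : ConvexOn ℝ (Ici 0) H) {z w : ℝ} (hz : 0 ≤ z) (hw : 0 ≤ w)
    {e' e : ℝ} (he' : 0 < e') (hee : e' ≤ e) (he1 : e ≤ 1) :
    (H (z + e' * (w - z)) - H z) / e' ≤ (H (z + e * (w - z)) - H z) / e := by
  set d := w - z with hd
  rcases eq_or_ne d 0 with hd0 | hd0
  · simp [hd0]
  have he : 0 < e := lt_of_lt_of_le he' hee
  have hmem : ∀ {s : ℝ}, 0 < s → s ≤ 1 → z + s * d ∈ Ici (0:ℝ) := by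
    intro s hs0 hs1
    have : z + s * d = (1 - s) * z + s * w := by rw [hd]; ring
    rw [this, mem_Ici]
    have := mul_nonneg (by linarith : (0:ℝ) ≤ 1 - s) hz
    nlinarith
  have h1 : z + e' * d ∈ Ici (0:ℝ) := hmem he' (le_trans hee he1)
  have h2 : z + e * d ∈ Ici (0:ℝ) := hmem he he1
  have hne1 : z + e' * d ≠ z := by
    intro h; apply hd0
    have : e' * d = 0 := by linarith
    exact (mul_eq_zero.1 this).resolve_left (ne_of_gt he')
  have hne2 : z + e * d ≠ z := by
    intro h; apply hd0
    have : e * d = 0 := by linarith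
    exact (mul_eq_zero.1 this).resolve_left (ne_of_gt he)
  have key : ∀ {s : ℝ}, s ≠ 0 → (H (z + s * d) - H z) / s
      = d * ((H (z + s * d) - H z) / (z + s * d - z)) := by
    intro s hs
    have : z + s * d - z = s * d := by ring
    rw [this]
    field_simp
  rw [key (ne_of_gt he'), key (ne_of_gt he)]
  rcases lt_or_gt_of_ne hd0 with hneg | hpos
  · have hle : z + e * d ≤ z + e' * d := by nlinarith
    have := hHconv.secant_mono hz h2 h1 hne2 hne1 hle
    exact mul_le_mul_of_nonpos_left this (le_of_lt hneg)
  · have hle : z + e' * d ≤ z + e * d := by nlinarith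
    have := hHconv.secant_mono hz h1 h2 hne1 hne2 hle
    exact mul_le_mul_of_nonneg_left this (le_of_lt hpos)

lemma tendsto_quot {z : ℝ} (hHdiff : DifferentiableAt ℝ H z) {d : ℝ} (hd0 : d ≠ 0) :
    Tendsto (fun e => (H (z + e * d) - H z) / e) (𝓝[>] (0:ℝ)) (𝓝 (deriv H z * d)) := by
  have hD := hHdiff.hasDerivAt
  have hs := hasDerivAt_iff_tendsto_slope.mp hD
  have hmap : Tendsto (fun e : ℝ => z + e * d) (𝓝[>] (0:ℝ)) (𝓝[≠] z) := by
    rw [tendsto_nhdsWithin_iff]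
    constructor
    · have hcont : Tendsto (fun e : ℝ => z + e * d) (𝓝 0) (𝓝 (z + 0 * d)) :=
        Continuous.tendsto (by continuity) 0
      simpa using hcont.mono_left nhdsWithin_le_nhds
    · filter_upwards [self_mem_nhdsWithin] with e (he : 0 < e)
      simp only [mem_compl_iff, mem_singleton_iff]
      intro h
      have : e * d = 0 := by linarith
      exact hd0 ((mul_eq_zero.1 this).resolve_left (ne_of_gt he))
  have hcomp : Tendsto (fun e => slope H z (z + e * d)) (𝓝[>] (0:ℝ)) (𝓝 (deriv H z)) :=
    hs.comp hmap
  have hmul : Tendsto (fun e => d * slope H z (z + e * d)) (𝓝[>] (0:ℝ))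
      (𝓝 (d * deriv H z)) := hcomp.const_mul d
  rw [show deriv H z * d = d * deriv H z from mul_comm _ _]
  refine hmul.congr' ?_
  filter_upwards [self_mem_nhdsWithin] with e (he : 0 < e)
  rw [slope_def_field]
  have h1 : z + e * d - z = e * d := by ring
  rw [h1]
  field_simp

lemma deriv_le_quotient (hHconv : ConvexOn ℝ (Ici 0) H)
    (hHdiff : ∀ z : ℝ, 0 ≤ z → DifferentiableAt ℝ H z)
    {z w : ℝ} (hz : 0 ≤ z) (hw : 0 ≤ w) {e : ℝ} (he0 : 0 < e) (he1 : e ≤ 1) :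
    deriv H z * (w - z) ≤ (H (z + e * (w - z)) - H z) / e := by
  set d := w - z with hd
  rcases eq_or_ne d 0 with hd0 | hd0
  · simp [hd0]
  have hT := tendsto_quot (hHdiff z hz) hd0
  refine le_of_tendsto hT ?_
  have hIoc : Ioc (0:ℝ) e ∈ 𝓝[>] (0:ℝ) := Ioc_mem_nhdsGT_of_mem ⟨le_refl _, he0⟩
  filter_upwards [hIoc] with e' he'
  exact quotient_le hHconv hz hw he'.1 he'.2 he1

lemma grad_ineq (hHconv : ConvexOn ℝ (Ici 0) H)
    (hHdiff : ∀ z : ℝ, 0 ≤ z → DifferentiableAt ℝ H z)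
    {z w : ℝ} (hz : 0 ≤ z) (hw : 0 ≤ w) :
    H z + deriv H z * (w - z) ≤ H w := by
  have h := deriv_le_quotient hHconv hHdiff hz hw (e := 1) one_pos le_rfl
  simp only [one_mul, div_one] at h
  have h2 : z + (w - z) = w := by ring
  rw [h2] at h
  linarith

def epsSeq (n : ℕ) : ℝ := ((n : ℝ) + 2)⁻¹

lemma epsSeq_pos (n : ℕ) : 0 < epsSeq n := by rw [epsSeq]; positivity

lemma epsSeq_lt_one (n : ℕ) : epsSeq n < 1 := by
  rw [epsSeq]
  rw [inv_lt_one₀ (by positivity)]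
  linarith [Nat.cast_nonneg (α := ℝ) n]

lemma epsSeq_antitone : Antitone epsSeq := by
  intro n m hnm
  rw [epsSeq, epsSeq]
  apply inv_anti₀ (by positivity)
  have : (n:ℝ) ≤ (m:ℝ) := by exact_mod_cast hnm
  linarith

lemma tendsto_epsSeq : Tendsto epsSeq atTop (𝓝[>] (0:ℝ)) := by
  rw [tendsto_nhdsWithin_iff]
  constructor
  · apply Tendsto.inv_tendsto_atTop
    exact tendsto_atTop_add_const_right _ 2 tendsto_natCast_atTop_atTop
  · exact Eventually.of_forall fun n => epsSeq_pos n

lemma tendsto_quotient_seq (hHdiff : ∀ z : ℝ, 0 ≤ z → DifferentiableAt ℝ H z)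
    {z w : ℝ} (hz : 0 ≤ z) :
    Tendsto (fun n => (H (z + epsSeq n * (w - z)) - H z) / epsSeq n) atTop
      (𝓝 (deriv H z * (w - z))) := by
  rcases eq_or_ne (w - z) 0 with hd0 | hd0
  · simp only [hd0, mul_zero, add_zero, sub_self, zero_div]
    exact tendsto_const_nhds
  · exact (tendsto_quot (hHdiff z hz) hd0).comp tendsto_epsSeq

lemma finiteRestrict {Ω : Set E2} (hΩb : Bornology.IsBounded Ω) :
    IsFiniteMeasure (volume.restrict Ω) := by
  constructor
  rw [Measure.restrict_apply_univ]
  exact hΩb.measure_lt_top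

lemma integrable_of_memLq {Ω : Set E2} (hΩb : Bornology.IsBounded Ω) {q : ℝ} (hq : 1 < q)
    {f : E2 → ℝ} (hf : MemLp f (ENNReal.ofReal q) (volume.restrict Ω)) :
    Integrable f (volume.restrict Ω) := by
  haveI := finiteRestrict hΩb
  exact hf.integrable (by
    rw [show (1 : ENNReal) = ENNReal.ofReal 1 by simp]
    exact ENNReal.ofReal_le_ofReal (le_of_lt hq))

lemma integrable_rpow_of_memLq {Ω : Set E2} {q : ℝ} (hq : 1 < q)
    {f : E2 → ℝ} (hf : MemLp f (ENNReal.ofReal q) (volume.restrict Ω))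
    (hfpos : ∀ᵐ x ∂(volume.restrict Ω), 0 ≤ f x) :
    Integrable (fun x => f x ^ q) (volume.restrict Ω) := by
  have h0 : (0:ℝ) < q := by linarith
  have h1 := hf.integrable_norm_rpow (by simp [h0]) (by simp)
  rw [ENNReal.toReal_ofReal (le_of_lt h0)] at h1
  refine h1.congr ?_
  filter_upwards [hfpos] with x hx
  rw [Real.norm_eq_abs, abs_of_nonneg hx]

lemma integrable_sandwich {α : Type*} [MeasurableSpace α] {μ : Measure α} {g m M : α → ℝ}
    (hg : AEStronglyMeasurable g μ) (h1 : ∀ᵐ x ∂μ, m x ≤ g x) (h2 : ∀ᵐ x ∂μ, g x ≤ M x)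
    (hm : Integrable m μ) (hM : Integrable M μ) : Integrable g μ := by
  refine Integrable.mono' (hm.norm.add hM.norm) hg ?_
  filter_upwards [h1, h2] with x hx1 hx2
  rw [Real.norm_eq_abs, abs_le]
  simp only [Pi.add_apply]
  simp only [Real.norm_eq_abs]
  constructor
  · linarith [neg_abs_le (m x), abs_nonneg (M x)]
  · linarith [le_abs_self (M x), abs_nonneg (m x)]

lemma integrable_H_comp {Ω : Set E2} (hΩb : Bornology.IsBounded Ω) {q b : ℝ} (hq : 1 < q)
    (hHmono : MonotoneOn H (Ici 0)) (hH0 : H 0 = 0)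
    (hHdiff : ∀ z : ℝ, 0 ≤ z → DifferentiableAt ℝ H z)
    (hgrowth : ∀ z : ℝ, 0 ≤ z → H z ≤ b * (z ^ q + 1))
    {f : E2 → ℝ} (hf : MemLp f (ENNReal.ofReal q) (volume.restrict Ω))
    (hfpos : ∀ᵐ x ∂(volume.restrict Ω), 0 ≤ f x) :
    Integrable (fun x => H (f x)) (volume.restrict Ω) := by
  haveI := finiteRestrict hΩb
  have hHt : Continuous (fun z => H (max z 0)) := by
    rw [continuous_iff_continuousAt]
    intro z
    exact ContinuousAt.comp ((hHdiff _ (le_max_right z 0)).continuousAt)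
      ((continuous_id.max continuous_const).continuousAt)
  have hsm : AEStronglyMeasurable (fun x => H (f x)) (volume.restrict Ω) := by
    refine (hHt.comp_aestronglyMeasurable hf.aestronglyMeasurable).congr ?_
    filter_upwards [hfpos] with x hx
    simp [max_eq_left hx]
  refine Integrable.mono'
    (((integrable_rpow_of_memLq hq hf hfpos).const_mul b).add (integrable_const b)) hsm ?_
  filter_upwards [hfpos] with x hx
  have h0 : 0 ≤ H (f x) := by
    rw [← hH0]
    exact hHmono (le_refl (0:ℝ)) hx hx
  rw [Real.norm_eq_abs, abs_of_nonneg h0]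
  have := hgrowth (f x) hx
  simp only [Pi.add_apply]
  linarith

lemma rpow_sub_one_mul {q : ℝ} (hq : 1 < q) {z : ℝ} (hz : 0 ≤ z) :
    z ^ (q - 1) * z = z ^ q := by
  rcases eq_or_lt_of_le hz with h | h
  · rw [← h]
    rw [Real.zero_rpow (by linarith), Real.zero_rpow (by linarith)]
    ring
  · calc z ^ (q-1) * z = z ^ (q-1) * z ^ (1:ℝ) := by rw [Real.rpow_one]
    _ = z ^ (q - 1 + 1) := (Real.rpow_add h _ _).symm
    _ = z ^ q := by ring_nf

lemma ae_curve {Ω : Set E2} {Q : Measure Curves} [IsProbabilityMeasure Q]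
    (hs : Q {σ : Curves | IsCurveIn (closure Ω) ⇑σ} = 1) :
    ∀ᵐ (σ : Curves) ∂Q, IsCurveIn (closure Ω) ⇑σ := by
  have hms := measurableSet_curveSet (closure Ω) isClosed_closure
  have h0 : Q {σ : Curves | IsCurveIn (closure Ω) ⇑σ}ᶜ = 0 :=
    (prob_compl_eq_zero_iff hms).2 hs
  rw [ae_iff]
  exact h0

lemma lw_integrable {Ω : Set E2} (hΩb : Bornology.IsBounded Ω) {Q : Measure Curves}
    (hae : ∀ᵐ (σ : Curves) ∂Q, IsCurveIn (closure Ω) ⇑σ)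
    (hlen : Integrable (fun σ : Curves => len ⇑σ) Q) (φ : C(E2, ℝ)) :
    Integrable (fun σ : Curves => Lw (⇑φ) ⇑σ) Q := by
  obtain ⟨M, hM⟩ := (hΩb.isCompact_closure).exists_bound_of_continuousOn
    φ.continuous.continuousOn
  refine Integrable.mono' (hlen.const_mul M)
    (lw_stronglyMeasurable φ).aestronglyMeasurable ?_
  filter_upwards [hae] with σ hσ
  rw [Real.norm_eq_abs]
  exact lw_le (fun x hx => by rw [← Real.norm_eq_abs]; exact hM x hx) hσ

lemma f_ae_zero_of_not_len_integrable {Ω : Set E2} (hΩb : Bornology.IsBounded Ω)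
    {μ0 μ1 : Measure E2} {q : ℝ} (hq : 1 < q) {Q : Measure Curves} {f : E2 → ℝ}
    (hQ : InQq Ω μ0 μ1 q Q f) (h : ¬ Integrable (fun σ : Curves => len ⇑σ) Q) :
    f =ᵐ[volume.restrict Ω] 0 := by
  have hid := hQ.2.2.2.2.2.2 (ContinuousMap.const E2 (1:ℝ))
  have h2 : (fun σ : Curves => Lw (⇑(ContinuousMap.const E2 (1:ℝ))) ⇑σ)
      = fun σ : Curves => len ⇑σ := by
    funext σ; exact lw_const_one _
  rw [h2] at hid
  rw [integral_undef h] at hid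
  have h3 : ∫ x in Ω, f x = 0 := by
    rw [← hid]
    refine integral_congr_ae (Eventually.of_forall fun x => ?_)
    simp
  have h4 : (0 : E2 → ℝ) ≤ᵐ[volume.restrict Ω] f := by
    filter_upwards [hQ.2.2.2.2.2.1] with x hx
    exact hx
  exact (integral_eq_zero_iff_of_nonneg_ae h4 (integrable_of_memLq hΩb hq hQ.2.2.2.2.1)).1 h3

lemma combo_InQq {Ω : Set E2} (hΩo : IsOpen Ω) (hΩb : Bornology.IsBounded Ω)
    {μ0 μ1 : Measure E2} {q : ℝ} (hq : 1 < q) {Qb Q : Measure Curves} {fb f : E2 → ℝ}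
    (hQb : InQq Ω μ0 μ1 q Qb fb) (hQ : InQq Ω μ0 μ1 q Q f)
    (hlenb : Integrable (fun σ : Curves => len ⇑σ) Qb)
    (hlen : Integrable (fun σ : Curves => len ⇑σ) Q)
    {ε : ℝ} (hε0 : 0 < ε) (hε1 : ε < 1) :
    InQq Ω μ0 μ1 q (ENNReal.ofReal (1 - ε) • Qb + ENNReal.ofReal ε • Q)
      (fun x => (1 - ε) * fb x + ε * f x) := by
  obtain ⟨hPb, hsb, h0b, h1b, hLb, hposb, hidb⟩ := hQb
  obtain ⟨hP, hs, h0, h1, hL, hpos, hid⟩ := hQ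
  haveI := hPb; haveI := hP
  have hone : ENNReal.ofReal (1-ε) + ENNReal.ofReal ε = 1 := by
    rw [← ENNReal.ofReal_add (by linarith) (le_of_lt hε0)]
    norm_num
  have haeb : ∀ᵐ (σ : Curves) ∂Qb, IsCurveIn (closure Ω) ⇑σ := ae_curve hsb
  have hae : ∀ᵐ (σ : Curves) ∂Q, IsCurveIn (closure Ω) ⇑σ := ae_curve hs
  refine ⟨?_, ?_, ?_, ?_, ?_, ?_, ?_⟩
  · constructor
    simp only [Measure.add_apply, Measure.smul_apply, smul_eq_mul]
    rw [measure_univ, measure_univ, mul_one, mul_one, hone]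
  · simp only [Measure.add_apply, Measure.smul_apply, smul_eq_mul]
    rw [hsb, hs, mul_one, mul_one, hone]
  · have hm : Measurable (fun σ : Curves => σ 0) := (continuous_eval_const (0:ℝ)).measurable
    rw [Measure.map_add _ _ hm, Measure.map_smul, Measure.map_smul, h0b, h0,
      ← add_smul, hone, one_smul]
  · have hm : Measurable (fun σ : Curves => σ 1) := (continuous_eval_const (1:ℝ)).measurable
    rw [Measure.map_add _ _ hm, Measure.map_smul, Measure.map_smul, h1b, h1,
      ← add_smul, hone, one_smul]
  · exact (hLb.const_mul (1-ε)).add (hL.const_mul ε)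
  · filter_upwards [hposb, hpos] with x h1x h2x
    have ha1 := mul_nonneg (by linarith : (0:ℝ) ≤ 1-ε) h1x
    have ha2 := mul_nonneg (le_of_lt hε0) h2x
    linarith
  · intro φ
    obtain ⟨M, hM⟩ := (hΩb.isCompact_closure).exists_bound_of_continuousOn
      φ.continuous.continuousOn
    have hfbI := integrable_of_memLq hΩb hq hLb
    have hfI := integrable_of_memLq hΩb hq hL
    have hmul : ∀ {g : E2 → ℝ}, Integrable g (volume.restrict Ω) →
        Integrable (fun x => φ x * g x) (volume.restrict Ω) := by
      intro g hg
      refine Integrable.mono' (hg.norm.const_mul M)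
        (φ.continuous.aestronglyMeasurable.mul hg.aestronglyMeasurable) ?_
      filter_upwards [ae_restrict_mem hΩo.measurableSet] with x hx
      rw [norm_mul]
      exact mul_le_mul_of_nonneg_right (hM x (subset_closure hx)) (norm_nonneg _)
    have hLwb := lw_integrable hΩb haeb hlenb φ
    have hLw := lw_integrable hΩb hae hlen φ
    have lhs : ∫ x in Ω, φ x * ((1-ε) * fb x + ε * f x)
        = (1-ε) * (∫ x in Ω, φ x * fb x) + ε * ∫ x in Ω, φ x * f x := by
      rw [← MeasureTheory.integral_const_mul, ← MeasureTheory.integral_const_mul,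
        ← integral_add ((hmul hfbI).const_mul (1-ε)) ((hmul hfI).const_mul ε)]
      refine integral_congr_ae (Eventually.of_forall fun x => ?_)
      simp only [Pi.add_apply]
      ring
    have rhs : ∫ σ, Lw (⇑φ) ⇑σ ∂(ENNReal.ofReal (1 - ε) • Qb + ENNReal.ofReal ε • Q)
        = (1-ε) * (∫ σ, Lw (⇑φ) ⇑σ ∂Qb) + ε * ∫ σ, Lw (⇑φ) ⇑σ ∂Q := by
      rw [integral_add_measure (hLwb.smul_measure ENNReal.ofReal_ne_top)
        (hLw.smul_measure ENNReal.ofReal_ne_top),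
        integral_smul_measure, integral_smul_measure,
        ENNReal.toReal_ofReal (by linarith : (0:ℝ) ≤ 1-ε),
        ENNReal.toReal_ofReal (le_of_lt hε0)]
      simp [smul_eq_mul]
    rw [lhs, rhs, hidb φ, hid φ]

end Aux

/-- variational characterization of minimizers of the congested problem. -/
theorem congested_transport_optimality_condition
    (Ω : Set E2) (hΩo : IsOpen Ω) (hΩb : Bornology.IsBounded Ω) (hΩconv : Convex ℝ Ω)
    (μ0 μ1 : Measure E2) (h0 : IsProbabilityMeasure μ0) (h1 : IsProbabilityMeasure μ1)
    (q a b c : ℝ) (hq : 1 < q) (ha : 0 < a) (hb : 0 < b) (hc : 0 < c)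
    (H : ℝ → ℝ) (hHconv : ConvexOn ℝ (Ici 0) H) (hHmono : MonotoneOn H (Ici 0))
    (hH0 : H 0 = 0) (hHdiff : ∀ z : ℝ, 0 ≤ z → DifferentiableAt ℝ H z)
    (hgrowth : ∀ z : ℝ, 0 ≤ z → a * z ^ q ≤ H z ∧ H z ≤ b * (z ^ q + 1))
    (hderiv : ∀ z : ℝ, 0 ≤ z → 0 ≤ deriv H z ∧ deriv H z ≤ c * (z ^ (q - 1) + 1))
    (Qbar : Measure Curves) (fbar : E2 → ℝ) (hQbar : InQq Ω μ0 μ1 q Qbar fbar) :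
    (∀ (Q : Measure Curves) (f : E2 → ℝ), InQq Ω μ0 μ1 q Q f →
        ∫ x in Ω, H (fbar x) ≤ ∫ x in Ω, H (f x)) ↔
    (∀ (Q : Measure Curves) (f : E2 → ℝ), InQq Ω μ0 μ1 q Q f →
        ∫ x in Ω, deriv H (fbar x) * fbar x ≤ ∫ x in Ω, deriv H (fbar x) * f x) := by
  classical
  haveI := finiteRestrict hΩb
  have hfbarLq := hQbar.2.2.2.2.1
  have hbar_pos := hQbar.2.2.2.2.2.1
  have hfbarI : Integrable fbar (volume.restrict Ω) := integrable_of_memLq hΩb hq hfbarLq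
  have hfbar_rpow := integrable_rpow_of_memLq hq hfbarLq hbar_pos
  have hHfbar : Integrable (fun x => H (fbar x)) (volume.restrict Ω) :=
    integrable_H_comp hΩb hq hHmono hH0 hHdiff (fun z hz => (hgrowth z hz).2) hfbarLq hbar_pos
  have hderiv_meas : AEStronglyMeasurable (fun x => deriv H (fbar x)) (volume.restrict Ω) :=
    ((measurable_deriv H).comp_aemeasurable
      hfbarLq.aestronglyMeasurable.aemeasurable).aestronglyMeasurable
  -- integrability of x ↦ H'(fbar x) * fbar x
  have hA_bound : ∀ᵐ x ∂(volume.restrict Ω),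
      deriv H (fbar x) * fbar x ≤ c * (fbar x ^ q + fbar x) := by
    filter_upwards [hbar_pos] with x hz
    have h2 := mul_le_mul_of_nonneg_right (hderiv (fbar x) hz).2 hz
    have h3 := rpow_sub_one_mul hq hz
    nlinarith
  have hA_int : Integrable (fun x => deriv H (fbar x) * fbar x) (volume.restrict Ω) := by
    refine integrable_sandwich (hderiv_meas.mul hfbarI.aestronglyMeasurable) ?_ hA_bound
      (integrable_const 0) ((hfbar_rpow.add hfbarI).const_mul c)
    filter_upwards [hbar_pos] with x hz
    exact mul_nonneg (hderiv (fbar x) hz).1 hz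
  constructor
  · -- minimality → variational inequality
    intro hmin Q f hQf
    have hfLq := hQf.2.2.2.2.1
    have hfpos := hQf.2.2.2.2.2.1
    have hfI : Integrable f (volume.restrict Ω) := integrable_of_memLq hΩb hq hfLq
    -- the conclusion is trivial when fbar = 0 a.e.
    have VI_of_bar0 : fbar =ᵐ[volume.restrict Ω] 0 →
        ∫ x in Ω, deriv H (fbar x) * fbar x ≤ ∫ x in Ω, deriv H (fbar x) * f x := by
      intro hb0
      have hL : ∫ x in Ω, deriv H (fbar x) * fbar x = 0 := by
        have heq : (fun x => deriv H (fbar x) * fbar x) =ᵐ[volume.restrict Ω] 0 := by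
          filter_upwards [hb0] with x hx
          simp [hx]
        rw [integral_congr_ae heq]
        simp
      rw [hL]
      refine integral_nonneg_of_ae ?_
      filter_upwards [hfpos, hb0] with x h1x h2x
      refine mul_nonneg ?_ h1x
      rw [show fbar x = 0 from h2x]
      exact (hderiv 0 le_rfl).1
    by_cases hb0 : fbar =ᵐ[volume.restrict Ω] 0
    · exact VI_of_bar0 hb0
    have hlenQbar : Integrable (fun σ : Curves => len ⇑σ) Qbar := by
      by_contra hcon
      exact hb0 (f_ae_zero_of_not_len_integrable hΩb hq hQbar hcon)
    by_cases hlenQ : Integrable (fun σ : Curves => len ⇑σ) Q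
    swap
    · -- degenerate case : f = 0 a.e., hence fbar = 0 a.e. by minimality
      have hf0 := f_ae_zero_of_not_len_integrable hΩb hq hQf hlenQ
      apply VI_of_bar0
      have h1 : ∫ x in Ω, H (f x) = 0 := by
        have heq : (fun x => H (f x)) =ᵐ[volume.restrict Ω] 0 := by
          filter_upwards [hf0] with x hx
          simp [show f x = 0 from hx, hH0]
        rw [integral_congr_ae heq]
        simp
      have h2 := hmin Q f hQf
      rw [h1] at h2
      have h3 : ∫ x in Ω, a * fbar x ^ q ≤ ∫ x in Ω, H (fbar x) := by
        refine integral_mono_ae (hfbar_rpow.const_mul a) hHfbar ?_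
        filter_upwards [hbar_pos] with x hx
        exact (hgrowth _ hx).1
      have h4 : 0 ≤ ∫ x in Ω, fbar x ^ q := by
        refine integral_nonneg_of_ae ?_
        filter_upwards [hbar_pos] with x hx
        exact Real.rpow_nonneg hx q
      rw [MeasureTheory.integral_const_mul] at h3
      have h6 : ∫ x in Ω, fbar x ^ q = 0 := le_antisymm (by nlinarith) h4
      have h7 : (fun x => fbar x ^ q) =ᵐ[volume.restrict Ω] 0 := by
        refine (integral_eq_zero_iff_of_nonneg_ae ?_ hfbar_rpow).1 h6
        filter_upwards [hbar_pos] with x hx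
        exact Real.rpow_nonneg hx q
      filter_upwards [h7, hbar_pos] with x hx1 hx2
      by_contra hne
      have hpos : 0 < fbar x := lt_of_le_of_ne hx2 (Ne.symm hne)
      have := Real.rpow_pos_of_pos hpos q
      rw [show fbar x ^ q = 0 from hx1] at this
      linarith
    · -- main case : perturbation argument
      have hcombo : ∀ n : ℕ, InQq Ω μ0 μ1 q
          (ENNReal.ofReal (1 - epsSeq n) • Qbar + ENNReal.ofReal (epsSeq n) • Q)
          (fun x => (1 - epsSeq n) * fbar x + epsSeq n * f x) := fun n =>
        combo_InQq hΩo hΩb hq hQbar hQf hlenQbar hlenQ (epsSeq_pos n) (epsSeq_lt_one n)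
      have hminn : ∀ n, ∫ x in Ω, H (fbar x)
          ≤ ∫ x in Ω, H ((1 - epsSeq n) * fbar x + epsSeq n * f x) := fun n =>
        hmin _ _ (hcombo n)
      have hformeq : ∀ e : ℝ, (fun x => H ((1 - e) * fbar x + e * f x))
          = fun x => H (fbar x + e * (f x - fbar x)) := by
        intro e; funext x; congr 1; ring
      have hfnpos : ∀ n, ∀ᵐ x ∂(volume.restrict Ω),
          0 ≤ (1 - epsSeq n) * fbar x + epsSeq n * f x := by
        intro n
        filter_upwards [hbar_pos, hfpos] with x h1x h2x
        have ha1 := mul_nonneg (by linarith [epsSeq_lt_one n] : (0:ℝ) ≤ 1 - epsSeq n) h1x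
        have ha2 := mul_nonneg (le_of_lt (epsSeq_pos n)) h2x
        linarith
      have hHfn : ∀ n, Integrable
          (fun x => H (fbar x + epsSeq n * (f x - fbar x))) (volume.restrict Ω) := by
        intro n
        refine (integrable_H_comp hΩb hq hHmono hH0 hHdiff (fun z hz => (hgrowth z hz).2)
          ((hfbarLq.const_mul (1 - epsSeq n)).add (hfLq.const_mul (epsSeq n))) (hfnpos n)).congr
          (Eventually.of_forall fun x => ?_)
        simp only [Pi.add_apply]
        congr 1
        ring
      set u : ℕ → E2 → ℝ :=
        fun n x => (H (fbar x + epsSeq n * (f x - fbar x)) - H (fbar x)) / epsSeq n with hu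
      have huint : ∀ n, Integrable (u n) (volume.restrict Ω) := fun n =>
        ((hHfn n).sub hHfbar).div_const (epsSeq n)
      set g : E2 → ℝ := fun x => deriv H (fbar x) * (f x - fbar x) with hg
      have hgsm : AEStronglyMeasurable g (volume.restrict Ω) :=
        hderiv_meas.mul (hfI.aestronglyMeasurable.sub hfbarI.aestronglyMeasurable)
      have hglow : ∀ᵐ x ∂(volume.restrict Ω), -(c * (fbar x ^ q + fbar x)) ≤ g x := by
        filter_upwards [hbar_pos, hfpos, hA_bound] with x h1x h2x h3x
        have ha1 : 0 ≤ deriv H (fbar x) * f x := mul_nonneg (hderiv (fbar x) h1x).1 h2x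
        have : g x = deriv H (fbar x) * f x - deriv H (fbar x) * fbar x := by
          rw [hg]; ring
        rw [this]
        linarith
      have hgup : ∀ᵐ x ∂(volume.restrict Ω), g x ≤ u 0 x := by
        filter_upwards [hbar_pos, hfpos] with x h1x h2x
        exact deriv_le_quotient hHconv hHdiff h1x h2x (epsSeq_pos 0)
          (le_of_lt (epsSeq_lt_one 0))
      have hgint : Integrable g (volume.restrict Ω) :=
        integrable_sandwich hgsm hglow hgup
          (((hfbar_rpow.add hfbarI).const_mul c).neg) (huint 0)
      have hanti : ∀ᵐ x ∂(volume.restrict Ω), Antitone fun n => u n x := by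
        filter_upwards [hbar_pos, hfpos] with x h1x h2x
        intro n m hnm
        exact quotient_le hHconv h1x h2x (epsSeq_pos m) (epsSeq_antitone hnm)
          (le_of_lt (epsSeq_lt_one n))
      have htend : ∀ᵐ x ∂(volume.restrict Ω),
          Tendsto (fun n => u n x) atTop (𝓝 (g x)) := by
        filter_upwards [hbar_pos] with x h1x
        exact tendsto_quotient_seq hHdiff h1x
      have hkey := integral_tendsto_of_tendsto_of_antitone huint hgint hanti htend
      have hun : ∀ n, 0 ≤ ∫ x in Ω, u n x := by
        intro n
        have h1 := hminn n
        rw [hformeq (epsSeq n)] at h1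
        have h2 : ∫ x in Ω, u n x
            = (∫ x in Ω, (H (fbar x + epsSeq n * (f x - fbar x)) - H (fbar x))) / epsSeq n := by
          rw [hu, integral_div]
        rw [h2, integral_sub (hHfn n) hHfbar]
        exact div_nonneg (by linarith) (le_of_lt (epsSeq_pos n))
      have hg0 : 0 ≤ ∫ x in Ω, g x := ge_of_tendsto' hkey hun
      have hB_int : Integrable (fun x => deriv H (fbar x) * f x) (volume.restrict Ω) := by
        have heq : (fun x => deriv H (fbar x) * f x)
            = fun x => g x + deriv H (fbar x) * fbar x := by
          funext x; rw [hg]; ring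
        rw [heq]
        exact hgint.add hA_int
      have hsplit : ∫ x in Ω, g x
          = (∫ x in Ω, deriv H (fbar x) * f x) - ∫ x in Ω, deriv H (fbar x) * fbar x := by
        rw [← integral_sub hB_int hA_int]
        refine integral_congr_ae (Eventually.of_forall fun x => ?_)
        rw [hg]; ring
      rw [hsplit] at hg0
      linarith
  · -- variational inequality → minimality
    intro hVI Q f hQf
    have hfLq := hQf.2.2.2.2.1
    have hfpos := hQf.2.2.2.2.2.1
    have hfI : Integrable f (volume.restrict Ω) := integrable_of_memLq hΩb hq hfLq
    have hHf : Integrable (fun x => H (f x)) (volume.restrict Ω) :=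
      integrable_H_comp hΩb hq hHmono hH0 hHdiff (fun z hz => (hgrowth z hz).2) hfLq hfpos
    set g : E2 → ℝ := fun x => deriv H (fbar x) * (f x - fbar x) with hg
    have hgsm : AEStronglyMeasurable g (volume.restrict Ω) :=
      hderiv_meas.mul (hfI.aestronglyMeasurable.sub hfbarI.aestronglyMeasurable)
    have hglow : ∀ᵐ x ∂(volume.restrict Ω), -(c * (fbar x ^ q + fbar x)) ≤ g x := by
      filter_upwards [hbar_pos, hfpos, hA_bound] with x h1x h2x h3x
      have ha1 : 0 ≤ deriv H (fbar x) * f x := mul_nonneg (hderiv (fbar x) h1x).1 h2x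
      have heq : g x = deriv H (fbar x) * f x - deriv H (fbar x) * fbar x := by
        rw [hg]; ring
      rw [heq]
      linarith
    have hgup : ∀ᵐ x ∂(volume.restrict Ω), g x ≤ H (f x) - H (fbar x) := by
      filter_upwards [hbar_pos, hfpos] with x h1x h2x
      have := grad_ineq hHconv hHdiff h1x h2x
      simp only [hg]
      linarith
    have hgint : Integrable g (volume.restrict Ω) :=
      integrable_sandwich hgsm hglow hgup
        (((hfbar_rpow.add hfbarI).const_mul c).neg) (hHf.sub hHfbar)
    have hB_int : Integrable (fun x => deriv H (fbar x) * f x) (volume.restrict Ω) := by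
      have heq : (fun x => deriv H (fbar x) * f x)
          = fun x => g x + deriv H (fbar x) * fbar x := by
        funext x; rw [hg]; ring
      rw [heq]
      exact hgint.add hA_int
    have hsplit : ∫ x in Ω, g x
        = (∫ x in Ω, deriv H (fbar x) * f x) - ∫ x in Ω, deriv H (fbar x) * fbar x := by
      rw [← integral_sub hB_int hA_int]
      refine integral_congr_ae (Eventually.of_forall fun x => ?_)
      rw [hg]; ring
    have hg0 : 0 ≤ ∫ x in Ω, g x := by
      rw [hsplit]
      have := hVI Q f hQf
      linarith
    have h1 : ∫ x in Ω, (H (fbar x) + g x) ≤ ∫ x in Ω, H (f x) := by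
      refine integral_mono_ae (hHfbar.add hgint) hHf ?_
      filter_upwards [hbar_pos, hfpos] with x h1x h2x
      have := grad_ineq hHconv hHdiff h1x h2x
      simp only [hg]
      linarith
    rw [integral_add hHfbar hgint] at h1
    linarith
end
end
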